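/- Suppose A ∈ M₃(ℚ) with S(A) = ⟨5,6,8⟩ = {0,5,6,8,10,11,12,13,14,…} and suppose the characteristic polynomial of A is x³ + p x² + q x + r with p, q, r ∈ ℤ. Then r ≠ 0. -/

import Mathlib

/-- The exponent set of a rational square matrix: those `n` with the `n`-th power integral. -/
def expSet {ι : Type*} [Fintype ι] [DecidableEq ι] (A : Matrix ι ι ℚ) : Set ℕ :=
  {n | ∀ i j, ((A ^ n) i j).den = 1}

lemma seven_not_mem : (7 : ℕ) ∉ (AddSubmonoid.closure {5, 6, 8} : AddSubmonoid ℕ) := by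
  intro h
  have key : ∀ n ∈ (AddSubmonoid.closure {5, 6, 8} : AddSubmonoid ℕ),
      n = 0 ∨ n = 5 ∨ n = 6 ∨ n = 8 ∨ 10 ≤ n := by
    intro n hn
    induction hn using AddSubmonoid.closure_induction with
    | mem x hx => simp only [Set.mem_insert_iff, Set.mem_singleton_iff] at hx; omega
    | zero => left; rfl
    | add x y hx hy ihx ihy => omega
  have := key 7 h
  omega

open Polynomial in
theorem charpoly_r_ne_zero (A : Matrix (Fin 3) (Fin 3) ℚ)
    (hS : expSet A = (AddSubmonoid.closure {5, 6, 8} : Set ℕ)) (p q r : ℤ)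
    (hchar : A.charpoly = X ^ 3 + C (p : ℚ) * X ^ 2 + C (q : ℚ) * X + C (r : ℚ)) :
    r ≠ 0 := by
  intro hr
  subst hr
  have hCH := Matrix.aeval_self_charpoly A
  rw [hchar] at hCH
  simp only [map_add, map_mul, map_pow, aeval_X, aeval_C, Int.cast_zero, map_zero, add_zero,
    Algebra.algebraMap_eq_smul_one, smul_mul_assoc, one_mul] at hCH
  rw [add_assoc] at hCH
  have h3 : A ^ 3 = -((p : ℚ) • A ^ 2 + (q : ℚ) • A) := eq_neg_of_add_eq_zero_left hCH
  have h7 : A ^ 7 = -((p : ℚ) • A ^ 6 + (q : ℚ) • A ^ 5) := by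
    rw [show (7 : ℕ) = 4 + 3 from rfl, pow_add, h3, mul_neg, mul_add, mul_smul_comm,
      mul_smul_comm, ← pow_add, ← pow_succ]
  have h5 : (5 : ℕ) ∈ expSet A := by rw [hS]; exact AddSubmonoid.subset_closure (by simp)
  have h6 : (6 : ℕ) ∈ expSet A := by rw [hS]; exact AddSubmonoid.subset_closure (by simp)
  have h7mem : (7 : ℕ) ∈ expSet A := by
    intro i j
    have ha := h5 i j
    have hb := h6 i j
    rw [Rat.den_eq_one_iff] at ha hb
    rw [h7]
    simp only [Matrix.neg_apply, Matrix.add_apply, Matrix.smul_apply, smul_eq_mul]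
    rw [← ha, ← hb]
    have hcast : -((p : ℚ) * (((A ^ 6) i j).num : ℚ) + (q : ℚ) * (((A ^ 5) i j).num : ℚ))
        = ((-(p * ((A ^ 6) i j).num + q * ((A ^ 5) i j).num) : ℤ) : ℚ) := by push_cast; ring
    rw [hcast]
    exact Rat.den_intCast _
  rw [hS] at h7mem
  exact seven_not_mem h7mem
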